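/- The axiom system E_RBB is sound modulo rooted branching bisimilarity over CCS_LC: for every equation t ≈ u in E_RBB and every closed substitution σ, σ(t) ~RBB σ(u). Consequently, E_RBB ⊢ t ≈ u implies σ(t) ~RBB σ(u) for every closed substitution σ. -/

import Mathlib

/-- Observable actions: names and co-names. -/
inductive Obs (Name : Type) : Type where
  | pos : Name → Obs Name
  | neg : Name → Obs Name
  deriving DecidableEq

/-- Complementation of observable actions: `ā̄ = a`. -/
def Obs.bar {Name : Type} : Obs Name → Obs Name
  | .pos a => .neg a
  | .neg a => .pos a

/-- Actions: observable actions plus the silent action τ. -/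
inductive Act (Name : Type) : Type where
  | obs : Obs Name → Act Name
  | tau : Act Name
  deriving DecidableEq

/-- Open CCS_LC terms: CCS terms extended with left merge and communication merge. -/
inductive TermLC (Name : Type) : Type where
  | nil : TermLC Name
  | var : ℕ → TermLC Name
  | pre : Act Name → TermLC Name → TermLC Name
  | plus : TermLC Name → TermLC Name → TermLC Name
  | par : TermLC Name → TermLC Name → TermLC Name
  | lmerge : TermLC Name → TermLC Name → TermLC Name
  | cmerge : TermLC Name → TermLC Name → TermLC Name
  deriving DecidableEq

/-- CCS_LC processes (closed terms). -/
inductive ProcLC (Name : Type) : Type where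
  | nil : ProcLC Name
  | pre : Act Name → ProcLC Name → ProcLC Name
  | plus : ProcLC Name → ProcLC Name → ProcLC Name
  | par : ProcLC Name → ProcLC Name → ProcLC Name
  | lmerge : ProcLC Name → ProcLC Name → ProcLC Name
  | cmerge : ProcLC Name → ProcLC Name → ProcLC Name
  deriving DecidableEq

/-- SOS transition relation for CCS_LC processes. -/
inductive TransLC {Name : Type} : ProcLC Name → Act Name → ProcLC Name → Prop where
  | pre : ∀ (μ : Act Name) (p : ProcLC Name), TransLC (.pre μ p) μ p
  | plusL : ∀ {p p' q : ProcLC Name} {μ : Act Name}, TransLC p μ p' → TransLC (.plus p q) μ p'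
  | plusR : ∀ {p q q' : ProcLC Name} {μ : Act Name}, TransLC q μ q' → TransLC (.plus p q) μ q'
  | parL : ∀ {p p' q : ProcLC Name} {μ : Act Name}, TransLC p μ p' → TransLC (.par p q) μ (.par p' q)
  | parR : ∀ {p q q' : ProcLC Name} {μ : Act Name}, TransLC q μ q' → TransLC (.par p q) μ (.par p q')
  | comm : ∀ {p p' q q' : ProcLC Name} {α : Obs Name},
      TransLC p (.obs α) p' → TransLC q (.obs α.bar) q' → TransLC (.par p q) .tau (.par p' q')
  | lmerge : ∀ {p p' : ProcLC Name} {μ : Act Name} (q : ProcLC Name),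
      TransLC p μ p' → TransLC (.lmerge p q) μ (.par p' q)
  | cmerge : ∀ {p p' q q' : ProcLC Name} {α : Obs Name},
      TransLC p (.obs α) p' → TransLC q (.obs α.bar) q' → TransLC (.cmerge p q) .tau (.par p' q')

/-- `→ε` on CCS_LC processes. -/
def EpsLC {Name : Type} : ProcLC Name → ProcLC Name → Prop :=
  Relation.ReflTransGen (fun p q => TransLC p Act.tau q)

/-- `R` is a branching bisimulation on CCS_LC processes. -/
def IsBBLC {Name : Type} (R : ProcLC Name → ProcLC Name → Prop) : Prop :=
  Symmetric R ∧
  ∀ p q, R p q → ∀ μ p', TransLC p μ p' →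
    (μ = Act.tau ∧ R p' q) ∨
    ∃ q'' q', EpsLC q q'' ∧ TransLC q'' μ q' ∧ R p q'' ∧ R p' q'

/-- Branching bisimilarity on CCS_LC processes. -/
def BBLC {Name : Type} (p q : ProcLC Name) : Prop :=
  ∃ R : ProcLC Name → ProcLC Name → Prop, IsBBLC R ∧ R p q

/-- Rooted branching bisimilarity on CCS_LC processes. -/
def RBBLC {Name : Type} (p q : ProcLC Name) : Prop :=
  (∀ (μ : Act Name) (p' : ProcLC Name), TransLC p μ p' → ∃ q', TransLC q μ q' ∧ BBLC p' q') ∧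
  (∀ (μ : Act Name) (q' : ProcLC Name), TransLC q μ q' → ∃ p', TransLC p μ p' ∧ BBLC p' q')

/-- Applying a substitution to a CCS_LC term. -/
def TermLC.subst {Name : Type} (σ : ℕ → TermLC Name) : TermLC Name → TermLC Name
  | .nil => .nil
  | .var x => σ x
  | .pre μ t => .pre μ (TermLC.subst σ t)
  | .plus t u => .plus (TermLC.subst σ t) (TermLC.subst σ u)
  | .par t u => .par (TermLC.subst σ t) (TermLC.subst σ u)
  | .lmerge t u => .lmerge (TermLC.subst σ t) (TermLC.subst σ u)
  | .cmerge t u => .cmerge (TermLC.subst σ t) (TermLC.subst σ u)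

/-- Applying a closed substitution to a CCS_LC term. -/
def TermLC.substP {Name : Type} (σ : ℕ → ProcLC Name) : TermLC Name → ProcLC Name
  | .nil => .nil
  | .var x => σ x
  | .pre μ t => .pre μ (TermLC.substP σ t)
  | .plus t u => .plus (TermLC.substP σ t) (TermLC.substP σ u)
  | .par t u => .par (TermLC.substP σ t) (TermLC.substP σ u)
  | .lmerge t u => .lmerge (TermLC.substP σ t) (TermLC.substP σ u)
  | .cmerge t u => .cmerge (TermLC.substP σ t) (TermLC.substP σ u)

/-- Equational-logic derivability from an axiom system `E` over CCS_LC terms. -/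
inductive DerivLC {Name : Type} (E : TermLC Name → TermLC Name → Prop) :
    TermLC Name → TermLC Name → Prop where
  | ax : ∀ {t u : TermLC Name} (σ : ℕ → TermLC Name), E t u →
      DerivLC E (TermLC.subst σ t) (TermLC.subst σ u)
  | refl : ∀ t : TermLC Name, DerivLC E t t
  | symm : ∀ {t u : TermLC Name}, DerivLC E t u → DerivLC E u t
  | trans : ∀ {t u v : TermLC Name}, DerivLC E t u → DerivLC E u v → DerivLC E t v
  | pre : ∀ {t u : TermLC Name} (μ : Act Name), DerivLC E t u → DerivLC E (.pre μ t) (.pre μ u)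
  | plus : ∀ {t u t' u' : TermLC Name}, DerivLC E t u → DerivLC E t' u' →
      DerivLC E (.plus t t') (.plus u u')
  | par : ∀ {t u t' u' : TermLC Name}, DerivLC E t u → DerivLC E t' u' →
      DerivLC E (.par t t') (.par u u')
  | lmerge : ∀ {t u t' u' : TermLC Name}, DerivLC E t u → DerivLC E t' u' →
      DerivLC E (.lmerge t t') (.lmerge u u')
  | cmerge : ∀ {t u t' u' : TermLC Name}, DerivLC E t u → DerivLC E t' u' →
      DerivLC E (.cmerge t t') (.cmerge u u')

/-- Variable `x` used in the axioms. -/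
def vx {Name : Type} : TermLC Name := .var 0
/-- Variable `y` used in the axioms. -/
def vy {Name : Type} : TermLC Name := .var 1
/-- Variable `z` used in the axioms. -/
def vz {Name : Type} : TermLC Name := .var 2

/-- The axiom system `E_RBB` over CCS_LC. -/
inductive ERBB (Name : Type) : TermLC Name → TermLC Name → Prop where
  | A0 : ERBB Name (.plus vx .nil) vx
  | A1 : ERBB Name (.plus vx vy) (.plus vy vx)
  | A2 : ERBB Name (.plus (.plus vx vy) vz) (.plus vx (.plus vy vz))
  | A3 : ERBB Name (.plus vx vx) vx
  | L0 : ERBB Name (.lmerge .nil vx) .nil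
  | L1 : ∀ μ : Act Name, ERBB Name (.lmerge (.pre μ vx) vy) (.pre μ (.par vx vy))
  | L2 : ERBB Name (.lmerge (.lmerge vx vy) vz) (.lmerge vx (.par vy vz))
  | L3 : ERBB Name (.lmerge vx .nil) vx
  | L4 : ERBB Name (.lmerge (.plus vx vy) vz) (.plus (.lmerge vx vz) (.lmerge vy vz))
  | C0 : ERBB Name (.cmerge .nil vx) .nil
  | C1 : ERBB Name (.cmerge vx vy) (.cmerge vy vx)
  | C2 : ERBB Name (.cmerge (.cmerge vx vy) vz) (.cmerge vx (.cmerge vy vz))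
  | C3 : ERBB Name (.cmerge (.plus vx vy) vz) (.plus (.cmerge vx vz) (.cmerge vy vz))
  | C4 : ∀ α β : Obs Name, α = β.bar →
      ERBB Name (.cmerge (.pre (.obs α) vx) (.pre (.obs β) vy)) (.pre .tau (.par vx vy))
  | C5 : ∀ α β : Obs Name, α ≠ β.bar →
      ERBB Name (.cmerge (.pre (.obs α) vx) (.pre (.obs β) vy)) .nil
  | C6 : ERBB Name (.cmerge (.lmerge vx vy) vz) (.lmerge (.cmerge vx vz) vy)
  | C7 : ERBB Name (.cmerge (.cmerge vx vy) vz) .nil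
  | P : ERBB Name (.par vx vy)
      (.plus (.plus (.lmerge vx vy) (.lmerge vy vx)) (.cmerge vx vy))
  | TB : ∀ μ : Act Name,
      ERBB Name (.pre μ (.plus (.pre .tau (.plus vx vy)) vy)) (.pre μ (.plus vx vy))
  | TL : ERBB Name (.lmerge vx (.pre .tau vy)) (.lmerge vx vy)
section Dev
variable {Name : Type}

open ProcLC Act

theorem Obs.bar_bar (α : Obs Name) : α.bar.bar = α := by cases α <;> rfl

theorem nil_no_trans {μ : Act Name} {p' : ProcLC Name} : ¬ TransLC .nil μ p' := by
  intro h; cases h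

theorem eps_parL {p p' q : ProcLC Name} (h : EpsLC p p') :
    EpsLC (ProcLC.par p q) (ProcLC.par p' q) :=
  Relation.ReflTransGen.lift (fun x => ProcLC.par x q) (fun _ _ h => TransLC.parL h) _ _ h

theorem eps_parR {p q q' : ProcLC Name} (h : EpsLC q q') :
    EpsLC (ProcLC.par p q) (ProcLC.par p q') :=
  Relation.ReflTransGen.lift (fun x => ProcLC.par p x) (fun _ _ h => TransLC.parR h) _ _ h

/-! ### Strong bisimilarity -/

def IsSB (R : ProcLC Name → ProcLC Name → Prop) : Prop :=
  Symmetric R ∧ ∀ p q, R p q → ∀ μ p', TransLC p μ p' → ∃ q', TransLC q μ q' ∧ R p' q'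

def SBisim (p q : ProcLC Name) : Prop := ∃ R, IsSB R ∧ R p q

theorem sb_refl (p : ProcLC Name) : SBisim p p :=
  ⟨Eq, ⟨fun _ _ h => h.symm, fun p q h μ p' hp => ⟨p', h ▸ hp, rfl⟩⟩, rfl⟩

theorem sb_symm {p q : ProcLC Name} (h : SBisim p q) : SBisim q p := by
  obtain ⟨R, hR, hpq⟩ := h; exact ⟨R, hR, hR.1 hpq⟩

theorem sb_step {p q : ProcLC Name} (h : SBisim p q) {μ p'} (hp : TransLC p μ p') :
    ∃ q', TransLC q μ q' ∧ SBisim p' q' := by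
  obtain ⟨R, hR, hpq⟩ := h
  obtain ⟨q', hq, hR'⟩ := hR.2 p q hpq μ p' hp
  exact ⟨q', hq, R, hR, hR'⟩

theorem isSB_SBisim : IsSB (SBisim (Name := Name)) :=
  ⟨fun _ _ h => sb_symm h, fun p q h μ p' hp => sb_step h hp⟩

theorem sb_trans {p q r : ProcLC Name} (h1 : SBisim p q) (h2 : SBisim q r) : SBisim p r := by
  refine ⟨fun x z => ∃ y, SBisim x y ∧ SBisim y z, ⟨?_, ?_⟩, q, h1, h2⟩
  · rintro x z ⟨y, h1, h2⟩; exact ⟨y, sb_symm h2, sb_symm h1⟩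
  · rintro x z ⟨y, h1, h2⟩ μ x' hx
    obtain ⟨y', hy, h1'⟩ := sb_step h1 hx
    obtain ⟨z', hz, h2'⟩ := sb_step h2 hy
    exact ⟨z', hz, y', h1', h2'⟩

theorem sb_par_congr {a b c d : ProcLC Name} (h1 : SBisim a b) (h2 : SBisim c d) :
    SBisim (ProcLC.par a c) (ProcLC.par b d) := by
  refine ⟨fun x y => ∃ a b c d, x = ProcLC.par a c ∧ y = ProcLC.par b d ∧
    SBisim a b ∧ SBisim c d, ⟨?_, ?_⟩, a, b, c, d, rfl, rfl, h1, h2⟩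
  · rintro x y ⟨a, b, c, d, rfl, rfl, h1, h2⟩
    exact ⟨b, a, d, c, rfl, rfl, sb_symm h1, sb_symm h2⟩
  · rintro x y ⟨a, b, c, d, rfl, rfl, h1, h2⟩ μ x' hx
    cases hx with
    | parL h =>
      obtain ⟨b', hb, h1'⟩ := sb_step h1 h
      exact ⟨_, TransLC.parL hb, _, _, _, _, rfl, rfl, h1', h2⟩
    | parR h =>
      obtain ⟨d', hd, h2'⟩ := sb_step h2 h
      exact ⟨_, TransLC.parR hd, _, _, _, _, rfl, rfl, h1, h2'⟩
    | comm hl hr =>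
      obtain ⟨b', hb, h1'⟩ := sb_step h1 hl
      obtain ⟨d', hd, h2'⟩ := sb_step h2 hr
      exact ⟨_, TransLC.comm hb hd, _, _, _, _, rfl, rfl, h1', h2'⟩

theorem sb_par_comm (p q : ProcLC Name) : SBisim (ProcLC.par p q) (ProcLC.par q p) := by
  refine ⟨fun x y => ∃ a b, x = ProcLC.par a b ∧ y = ProcLC.par b a, ⟨?_, ?_⟩,
    p, q, rfl, rfl⟩
  · rintro x y ⟨a, b, rfl, rfl⟩; exact ⟨b, a, rfl, rfl⟩
  · rintro x y ⟨a, b, rfl, rfl⟩ μ x' hx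
    cases hx with
    | parL h => exact ⟨_, TransLC.parR h, _, _, rfl, rfl⟩
    | parR h => exact ⟨_, TransLC.parL h, _, _, rfl, rfl⟩
    | comm hl hr =>
      refine ⟨_, TransLC.comm hr ?_, _, _, rfl, rfl⟩
      rw [Obs.bar_bar]; exact hl

theorem sb_par_assoc (p q r : ProcLC Name) :
    SBisim (ProcLC.par (ProcLC.par p q) r) (ProcLC.par p (ProcLC.par q r)) := by
  refine ⟨fun x y => (∃ a b c, x = ProcLC.par (ProcLC.par a b) c ∧
      y = ProcLC.par a (ProcLC.par b c)) ∨
      (∃ a b c, y = ProcLC.par (ProcLC.par a b) c ∧ x = ProcLC.par a (ProcLC.par b c)),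
    ⟨?_, ?_⟩, Or.inl ⟨p, q, r, rfl, rfl⟩⟩
  · rintro x y (⟨a, b, c, rfl, rfl⟩ | ⟨a, b, c, rfl, rfl⟩)
    · exact Or.inr ⟨a, b, c, rfl, rfl⟩
    · exact Or.inl ⟨a, b, c, rfl, rfl⟩
  · rintro x y (⟨a, b, c, rfl, rfl⟩ | ⟨a, b, c, rfl, rfl⟩) μ x' hx
    · cases hx with
      | parL h =>
        cases h with
        | parL h => exact ⟨_, TransLC.parL h, Or.inl ⟨_, _, _, rfl, rfl⟩⟩
        | parR h => exact ⟨_, TransLC.parR (TransLC.parL h), Or.inl ⟨_, _, _, rfl, rfl⟩⟩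
        | comm hl hr =>
          exact ⟨_, TransLC.comm hl (TransLC.parL hr), Or.inl ⟨_, _, _, rfl, rfl⟩⟩
      | parR h => exact ⟨_, TransLC.parR (TransLC.parR h), Or.inl ⟨_, _, _, rfl, rfl⟩⟩
      | comm hl hr =>
        cases hl with
        | parL h => exact ⟨_, TransLC.comm h (TransLC.parR hr), Or.inl ⟨_, _, _, rfl, rfl⟩⟩
        | parR h => exact ⟨_, TransLC.parR (TransLC.comm h hr), Or.inl ⟨_, _, _, rfl, rfl⟩⟩
    · cases hx with
      | parL h => exact ⟨_, TransLC.parL (TransLC.parL h), Or.inr ⟨_, _, _, rfl, rfl⟩⟩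
      | parR h =>
        cases h with
        | parL h => exact ⟨_, TransLC.parL (TransLC.parR h), Or.inr ⟨_, _, _, rfl, rfl⟩⟩
        | parR h => exact ⟨_, TransLC.parR h, Or.inr ⟨_, _, _, rfl, rfl⟩⟩
        | comm hl hr => exact ⟨_, TransLC.comm (TransLC.parR hl) hr, Or.inr ⟨_, _, _, rfl, rfl⟩⟩
      | comm hl hr =>
        cases hr with
        | parL h => exact ⟨_, TransLC.parL (TransLC.comm hl h), Or.inr ⟨_, _, _, rfl, rfl⟩⟩
        | parR h => exact ⟨_, TransLC.comm (TransLC.parL hl) h, Or.inr ⟨_, _, _, rfl, rfl⟩⟩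

theorem sb_par_nil (p : ProcLC Name) : SBisim (ProcLC.par p ProcLC.nil) p := by
  refine ⟨fun x y => (∃ a, x = ProcLC.par a ProcLC.nil ∧ y = a) ∨
      (∃ a, y = ProcLC.par a ProcLC.nil ∧ x = a), ⟨?_, ?_⟩, Or.inl ⟨p, rfl, rfl⟩⟩
  · rintro x y (⟨a, rfl, rfl⟩ | ⟨a, rfl, rfl⟩)
    · exact Or.inr ⟨_, rfl, rfl⟩
    · exact Or.inl ⟨_, rfl, rfl⟩
  · rintro x y (⟨a, rfl, rfl⟩ | ⟨a, rfl, rfl⟩) μ x' hx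
    · cases hx with
      | parL h => exact ⟨_, h, Or.inl ⟨_, rfl, rfl⟩⟩
      | parR h => exact absurd h nil_no_trans
      | comm hl hr => exact absurd hr nil_no_trans
    · exact ⟨_, TransLC.parL hx, Or.inr ⟨_, rfl, rfl⟩⟩

end Dev
section Dev2
variable {Name : Type}

/-! ### Basic properties of branching bisimilarity -/

theorem bb_symm {p q : ProcLC Name} (h : BBLC p q) : BBLC q p := by
  obtain ⟨R, hR, hpq⟩ := h; exact ⟨R, hR, hR.1 hpq⟩

theorem bb_refl (p : ProcLC Name) : BBLC p p := by
  refine ⟨Eq, ⟨fun _ _ h => h.symm, ?_⟩, rfl⟩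
  rintro p q rfl μ p' hp
  exact Or.inr ⟨p, p', Relation.ReflTransGen.refl, hp, rfl, rfl⟩

theorem bb_step {p q : ProcLC Name} (h : BBLC p q) {μ p'} (hp : TransLC p μ p') :
    (μ = Act.tau ∧ BBLC p' q) ∨
    ∃ q'' q', EpsLC q q'' ∧ TransLC q'' μ q' ∧ BBLC p q'' ∧ BBLC p' q' := by
  obtain ⟨R, hR, hpq⟩ := h
  rcases hR.2 p q hpq μ p' hp with ⟨rfl, h'⟩ | ⟨q'', q', he, ht, h1, h2⟩
  · exact Or.inl ⟨rfl, R, hR, h'⟩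
  · exact Or.inr ⟨q'', q', he, ht, ⟨R, hR, h1⟩, ⟨R, hR, h2⟩⟩

theorem bb_of_sb {p q : ProcLC Name} (h : SBisim p q) : BBLC p q := by
  refine ⟨SBisim, ⟨fun _ _ h => sb_symm h, ?_⟩, h⟩
  intro p q hpq μ p' hp
  obtain ⟨q', hq, h'⟩ := sb_step hpq hp
  exact Or.inr ⟨q, q', Relation.ReflTransGen.refl, hq, hpq, h'⟩

/-! ### Semi-branching bisimulations -/

def IsSBB (R : ProcLC Name → ProcLC Name → Prop) : Prop :=
  Symmetric R ∧ ∀ p q, R p q → ∀ μ p', TransLC p μ p' →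
    ∃ q'', EpsLC q q'' ∧ R p q'' ∧
      ((μ = Act.tau ∧ R p' q'') ∨ ∃ q', TransLC q'' μ q' ∧ R p' q')

def SBB (p q : ProcLC Name) : Prop := ∃ R, IsSBB R ∧ R p q

theorem sbb_symm {p q : ProcLC Name} (h : SBB p q) : SBB q p := by
  obtain ⟨R, hR, hpq⟩ := h; exact ⟨R, hR, hR.1 hpq⟩

theorem sbb_of_bb {p q : ProcLC Name} (h : BBLC p q) : SBB p q := by
  obtain ⟨R, hR, hpq⟩ := h
  refine ⟨R, ⟨hR.1, ?_⟩, hpq⟩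
  intro p q hpq μ p' hp
  rcases hR.2 p q hpq μ p' hp with ⟨rfl, h'⟩ | ⟨q'', q', he, ht, h1, h2⟩
  · exact ⟨q, Relation.ReflTransGen.refl, hpq, Or.inl ⟨rfl, h'⟩⟩
  · exact ⟨q'', he, h1, Or.inr ⟨q', ht, h2⟩⟩

theorem sbb_step {p q : ProcLC Name} (h : SBB p q) {μ p'} (hp : TransLC p μ p') :
    ∃ q'', EpsLC q q'' ∧ SBB p q'' ∧
      ((μ = Act.tau ∧ SBB p' q'') ∨ ∃ q', TransLC q'' μ q' ∧ SBB p' q') := by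
  obtain ⟨R, hR, hpq⟩ := h
  obtain ⟨q'', he, h1, hrest⟩ := hR.2 p q hpq μ p' hp
  refine ⟨q'', he, ⟨R, hR, h1⟩, ?_⟩
  rcases hrest with ⟨hμ, h2⟩ | ⟨q', ht, h2⟩
  · exact Or.inl ⟨hμ, R, hR, h2⟩
  · exact Or.inr ⟨q', ht, R, hR, h2⟩

theorem sbb_refl (p : ProcLC Name) : SBB p p :=
  sbb_of_bb (bb_refl p)

/-- Silent moves can be simulated up to `SBB`. -/
theorem sbb_eps {p q p₁ : ProcLC Name} (h : SBB p q) (he : EpsLC p p₁) :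
    ∃ q₁, EpsLC q q₁ ∧ SBB p₁ q₁ := by
  induction he with
  | refl => exact ⟨q, Relation.ReflTransGen.refl, h⟩
  | tail hsteps hstep ih =>
    obtain ⟨q₁, he₁, hb⟩ := ih
    obtain ⟨q₂, he₂, _, hrest⟩ := sbb_step hb hstep
    rcases hrest with ⟨_, h2⟩ | ⟨q₃, ht, h2⟩
    · exact ⟨q₂, he₁.trans he₂, h2⟩
    · exact ⟨q₃, (he₁.trans he₂).tail ht, h2⟩

theorem sbb_trans {p q r : ProcLC Name} (h1 : SBB p q) (h2 : SBB q r) : SBB p r := by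
  refine ⟨fun x z => ∃ y, SBB x y ∧ SBB y z, ⟨?_, ?_⟩, q, h1, h2⟩
  · rintro x z ⟨y, h1, h2⟩; exact ⟨y, sbb_symm h2, sbb_symm h1⟩
  · rintro x z ⟨y, h1, h2⟩ μ x' hx
    obtain ⟨y'', hey, hxy'', hrest⟩ := sbb_step h1 hx
    obtain ⟨z₁, hez₁, hy''z₁⟩ := sbb_eps h2 hey
    rcases hrest with ⟨hμ, hx'y''⟩ | ⟨y', hty, hx'y'⟩
    · exact ⟨z₁, hez₁, ⟨y'', hxy'', hy''z₁⟩, Or.inl ⟨hμ, y'', hx'y'', hy''z₁⟩⟩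
    · obtain ⟨z₂, hez₂, hy''z₂, hrest2⟩ := sbb_step hy''z₁ hty
      rcases hrest2 with ⟨hμ, hy'z₂⟩ | ⟨z', htz, hy'z'⟩
      · exact ⟨z₂, hez₁.trans hez₂, ⟨y'', hxy'', hy''z₂⟩, Or.inl ⟨hμ, y', hx'y', hy'z₂⟩⟩
      · exact ⟨z₂, hez₁.trans hez₂, ⟨y'', hxy'', hy''z₂⟩,
          Or.inr ⟨z', htz, y', hx'y', hy'z'⟩⟩

/-- The stuttering relation used to show that `SBB` is a branching bisimulation. -/
theorem isSBB_stutter :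
    IsSBB (fun (x y : ProcLC Name) => SBB x y ∨
      (∃ u v, SBB x u ∧ SBB x v ∧ EpsLC u y ∧ EpsLC y v) ∨
      (∃ u v, SBB u y ∧ SBB v y ∧ EpsLC u x ∧ EpsLC x v)) := by
  constructor
  · rintro x y (h | ⟨u, v, h1, h2, h3, h4⟩ | ⟨u, v, h1, h2, h3, h4⟩)
    · exact Or.inl (sbb_symm h)
    · exact Or.inr (Or.inr ⟨u, v, sbb_symm h1, sbb_symm h2, h3, h4⟩)
    · exact Or.inr (Or.inl ⟨u, v, sbb_symm h1, sbb_symm h2, h3, h4⟩)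
  · rintro x y (h | ⟨u, v, hxu, hxv, huy, hyv⟩ | ⟨u, v, huy, hvy, hux, hxv⟩) μ x' hx
    · obtain ⟨q'', he, h1, hrest⟩ := sbb_step h hx
      refine ⟨q'', he, Or.inl h1, ?_⟩
      rcases hrest with ⟨hμ, h2⟩ | ⟨q', ht, h2⟩
      · exact Or.inl ⟨hμ, Or.inl h2⟩
      · exact Or.inr ⟨q', ht, Or.inl h2⟩
    · -- x on the left, y between u and v with SBB x u, SBB x v: use v
      obtain ⟨v'', he, h1, hrest⟩ := sbb_step hxv hx
      refine ⟨v'', hyv.trans he, Or.inl h1, ?_⟩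
      rcases hrest with ⟨hμ, h2⟩ | ⟨v', ht, h2⟩
      · exact Or.inl ⟨hμ, Or.inl h2⟩
      · exact Or.inr ⟨v', ht, Or.inl h2⟩
    · -- x between u and v with SBB u y, SBB v y
      obtain ⟨y₁, hey₁, hxy₁⟩ := sbb_eps huy hux
      obtain ⟨y₂, hey₂, hxy₂, hrest⟩ := sbb_step hxy₁ hx
      refine ⟨y₂, hey₁.trans hey₂, Or.inl hxy₂, ?_⟩
      rcases hrest with ⟨hμ, h2⟩ | ⟨y', ht, h2⟩
      · exact Or.inl ⟨hμ, Or.inl h2⟩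
      · exact Or.inr ⟨y', ht, Or.inl h2⟩

/-- `SBB` is a branching bisimulation; hence `SBB ⊆ BBLC`. -/
theorem bb_of_sbb {p q : ProcLC Name} (h : SBB p q) : BBLC p q := by
  refine ⟨SBB, ⟨fun _ _ h => sbb_symm h, ?_⟩, h⟩
  intro p q hpq μ p' hp
  obtain ⟨q'', he, hpq'', hrest⟩ := sbb_step hpq hp
  rcases hrest with ⟨rfl, hp'q''⟩ | ⟨q', ht, hp'q'⟩
  · rcases Relation.ReflTransGen.cases_tail he with rfl | ⟨w, hqw, hwq''⟩
    · exact Or.inl ⟨rfl, hp'q''⟩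
    · refine Or.inr ⟨w, q'', hqw, hwq'', ?_, hp'q''⟩
      exact ⟨_, isSBB_stutter,
        Or.inr (Or.inl ⟨q, q'', hpq, hpq'', hqw, Relation.ReflTransGen.single hwq''⟩)⟩
  · exact Or.inr ⟨q'', q', he, ht, hpq'', hp'q'⟩

theorem bb_trans {p q r : ProcLC Name} (h1 : BBLC p q) (h2 : BBLC q r) : BBLC p r :=
  bb_of_sbb (sbb_trans (sbb_of_bb h1) (sbb_of_bb h2))

end Dev2
section Dev3
variable {Name : Type}

theorem rbb_refl (p : ProcLC Name) : RBBLC p p :=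
  ⟨fun _ p' h => ⟨p', h, bb_refl p'⟩, fun _ q' h => ⟨q', h, bb_refl q'⟩⟩

theorem rbb_symm {p q : ProcLC Name} (h : RBBLC p q) : RBBLC q p :=
  ⟨fun μ q' hq => (h.2 μ q' hq).imp fun p' ⟨hp, hb⟩ => ⟨hp, bb_symm hb⟩,
   fun μ p' hp => (h.1 μ p' hp).imp fun q' ⟨hq, hb⟩ => ⟨hq, bb_symm hb⟩⟩

theorem rbb_trans {p q r : ProcLC Name} (h1 : RBBLC p q) (h2 : RBBLC q r) : RBBLC p r := by
  constructor
  · intro μ p' hp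
    obtain ⟨q', hq, hb1⟩ := h1.1 μ p' hp
    obtain ⟨r', hr, hb2⟩ := h2.1 μ q' hq
    exact ⟨r', hr, bb_trans hb1 hb2⟩
  · intro μ r' hr
    obtain ⟨q', hq, hb2⟩ := h2.2 μ r' hr
    obtain ⟨p', hp, hb1⟩ := h1.2 μ q' hq
    exact ⟨p', hp, bb_trans hb1 hb2⟩

theorem bb_of_rbb {p q : ProcLC Name} (h : RBBLC p q) : BBLC p q := by
  refine ⟨fun x y => BBLC x y ∨ (x = p ∧ y = q) ∨ (x = q ∧ y = p), ⟨?_, ?_⟩, Or.inr (Or.inl ⟨rfl, rfl⟩)⟩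
  · rintro x y (hb | ⟨rfl, rfl⟩ | ⟨rfl, rfl⟩)
    · exact Or.inl (bb_symm hb)
    · exact Or.inr (Or.inr ⟨rfl, rfl⟩)
    · exact Or.inr (Or.inl ⟨rfl, rfl⟩)
  · rintro x y (hb | ⟨rfl, rfl⟩ | ⟨rfl, rfl⟩) μ x' hx
    · rcases bb_step hb hx with ⟨rfl, h'⟩ | ⟨q'', q', he, ht, h1, h2⟩
      · exact Or.inl ⟨rfl, Or.inl h'⟩
      · exact Or.inr ⟨q'', q', he, ht, Or.inl h1, Or.inl h2⟩
    · obtain ⟨y', hy, hb'⟩ := h.1 μ x' hx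
      exact Or.inr ⟨y, y', Relation.ReflTransGen.refl, hy, Or.inr (Or.inl ⟨rfl, rfl⟩), Or.inl hb'⟩
    · obtain ⟨y', hy, hb'⟩ := h.2 μ x' hx
      exact Or.inr ⟨y, y', Relation.ReflTransGen.refl, hy, Or.inr (Or.inr ⟨rfl, rfl⟩),
        Or.inl (bb_symm hb')⟩

/-- Branching bisimilarity is a congruence for parallel composition. -/
theorem bb_par_congr {a b c d : ProcLC Name} (h1 : BBLC a b) (h2 : BBLC c d) :
    BBLC (ProcLC.par a c) (ProcLC.par b d) := by
  refine ⟨fun x y => ∃ a b c d, x = ProcLC.par a c ∧ y = ProcLC.par b d ∧ BBLC a b ∧ BBLC c d,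
    ⟨?_, ?_⟩, a, b, c, d, rfl, rfl, h1, h2⟩
  · rintro x y ⟨a, b, c, d, rfl, rfl, h1, h2⟩
    exact ⟨b, a, d, c, rfl, rfl, bb_symm h1, bb_symm h2⟩
  · rintro x y ⟨a, b, c, d, rfl, rfl, h1, h2⟩ μ x' hx
    cases hx with
    | parL h =>
      rcases bb_step h1 h with ⟨rfl, h'⟩ | ⟨b'', b', he, ht, hb1, hb2⟩
      · exact Or.inl ⟨rfl, _, _, _, _, rfl, rfl, h', h2⟩
      · exact Or.inr ⟨_, _, eps_parL he, TransLC.parL ht,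
          ⟨_, _, _, _, rfl, rfl, hb1, h2⟩, ⟨_, _, _, _, rfl, rfl, hb2, h2⟩⟩
    | parR h =>
      rcases bb_step h2 h with ⟨rfl, h'⟩ | ⟨d'', d', he, ht, hb1, hb2⟩
      · exact Or.inl ⟨rfl, _, _, _, _, rfl, rfl, h1, h'⟩
      · exact Or.inr ⟨_, _, eps_parR he, TransLC.parR ht,
          ⟨_, _, _, _, rfl, rfl, h1, hb1⟩, ⟨_, _, _, _, rfl, rfl, h1, hb2⟩⟩
    | comm hl hr =>
      rcases bb_step h1 hl with ⟨h', _⟩ | ⟨b'', b', heb, htb, hb1, hb2⟩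
      · exact absurd h' (by simp)
      rcases bb_step h2 hr with ⟨h', _⟩ | ⟨d'', d', hed, htd, hd1, hd2⟩
      · exact absurd h' (by simp)
      exact Or.inr ⟨_, _, (eps_parL heb).trans (eps_parR hed), TransLC.comm htb htd,
        ⟨_, _, _, _, rfl, rfl, hb1, hd1⟩, ⟨_, _, _, _, rfl, rfl, hb2, hd2⟩⟩

theorem rbb_pre {t u : ProcLC Name} (μ : Act Name) (h : BBLC t u) :
    RBBLC (ProcLC.pre μ t) (ProcLC.pre μ u) := by
  constructor
  · intro ν p' hp; cases hp; exact ⟨u, TransLC.pre μ u, h⟩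
  · intro ν q' hq; cases hq; exact ⟨t, TransLC.pre μ t, h⟩

theorem rbb_plus {p q r s : ProcLC Name} (h1 : RBBLC p q) (h2 : RBBLC r s) :
    RBBLC (ProcLC.plus p r) (ProcLC.plus q s) := by
  constructor
  · intro μ x hx
    cases hx with
    | plusL h => obtain ⟨q', hq, hb⟩ := h1.1 μ _ h; exact ⟨q', TransLC.plusL hq, hb⟩
    | plusR h => obtain ⟨s', hs, hb⟩ := h2.1 μ _ h; exact ⟨s', TransLC.plusR hs, hb⟩
  · intro μ x hx
    cases hx with
    | plusL h => obtain ⟨p', hp, hb⟩ := h1.2 μ _ h; exact ⟨p', TransLC.plusL hp, hb⟩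
    | plusR h => obtain ⟨r', hr, hb⟩ := h2.2 μ _ h; exact ⟨r', TransLC.plusR hr, hb⟩

theorem rbb_par {p q r s : ProcLC Name} (h1 : RBBLC p q) (h2 : RBBLC r s) :
    RBBLC (ProcLC.par p r) (ProcLC.par q s) := by
  have hb1 := bb_of_rbb h1
  have hb2 := bb_of_rbb h2
  constructor
  · intro μ x hx
    cases hx with
    | parL h =>
      obtain ⟨q', hq, hb⟩ := h1.1 μ _ h
      exact ⟨_, TransLC.parL hq, bb_par_congr hb hb2⟩
    | parR h =>
      obtain ⟨s', hs, hb⟩ := h2.1 μ _ h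
      exact ⟨_, TransLC.parR hs, bb_par_congr hb1 hb⟩
    | comm hl hr =>
      obtain ⟨q', hq, hbq⟩ := h1.1 _ _ hl
      obtain ⟨s', hs, hbs⟩ := h2.1 _ _ hr
      exact ⟨_, TransLC.comm hq hs, bb_par_congr hbq hbs⟩
  · intro μ x hx
    cases hx with
    | parL h =>
      obtain ⟨p', hp, hb⟩ := h1.2 μ _ h
      exact ⟨_, TransLC.parL hp, bb_par_congr hb hb2⟩
    | parR h =>
      obtain ⟨r', hr, hb⟩ := h2.2 μ _ h
      exact ⟨_, TransLC.parR hr, bb_par_congr hb1 hb⟩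
    | comm hl hr =>
      obtain ⟨p', hp, hbp⟩ := h1.2 _ _ hl
      obtain ⟨r', hr, hbr⟩ := h2.2 _ _ hr
      exact ⟨_, TransLC.comm hp hr, bb_par_congr hbp hbr⟩

theorem rbb_lmerge {p q r s : ProcLC Name} (h1 : RBBLC p q) (h2 : RBBLC r s) :
    RBBLC (ProcLC.lmerge p r) (ProcLC.lmerge q s) := by
  have hb2 := bb_of_rbb h2
  constructor
  · intro μ x hx
    cases hx with
    | lmerge _ h =>
      obtain ⟨q', hq, hb⟩ := h1.1 μ _ h
      exact ⟨_, TransLC.lmerge s hq, bb_par_congr hb hb2⟩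
  · intro μ x hx
    cases hx with
    | lmerge _ h =>
      obtain ⟨p', hp, hb⟩ := h1.2 μ _ h
      exact ⟨_, TransLC.lmerge r hp, bb_par_congr hb hb2⟩

theorem rbb_cmerge {p q r s : ProcLC Name} (h1 : RBBLC p q) (h2 : RBBLC r s) :
    RBBLC (ProcLC.cmerge p r) (ProcLC.cmerge q s) := by
  constructor
  · intro μ x hx
    cases hx with
    | cmerge hl hr =>
      obtain ⟨q', hq, hbq⟩ := h1.1 _ _ hl
      obtain ⟨s', hs, hbs⟩ := h2.1 _ _ hr
      exact ⟨_, TransLC.cmerge hq hs, bb_par_congr hbq hbs⟩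
  · intro μ x hx
    cases hx with
    | cmerge hl hr =>
      obtain ⟨p', hp, hbp⟩ := h1.2 _ _ hl
      obtain ⟨r', hr, hbr⟩ := h2.2 _ _ hr
      exact ⟨_, TransLC.cmerge hp hr, bb_par_congr hbp hbr⟩

end Dev3
section Dev4
variable {Name : Type}

theorem pre_inv {μ ν : Act Name} {p p' : ProcLC Name} (h : TransLC (ProcLC.pre μ p) ν p') :
    ν = μ ∧ p' = p := by cases h; exact ⟨rfl, rfl⟩

theorem sb_swap23 (a b c : ProcLC Name) :
    SBisim (ProcLC.par (ProcLC.par a b) c) (ProcLC.par (ProcLC.par a c) b) :=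
  sb_trans (sb_par_assoc a b c)
    (sb_trans (sb_par_congr (sb_refl a) (sb_par_comm b c)) (sb_symm (sb_par_assoc a c b)))

theorem bb_TB (p q : ProcLC Name) :
    BBLC (ProcLC.plus (ProcLC.pre Act.tau (ProcLC.plus p q)) q) (ProcLC.plus p q) := by
  refine ⟨fun x y => x = y ∨
      (x = ProcLC.plus (ProcLC.pre Act.tau (ProcLC.plus p q)) q ∧ y = ProcLC.plus p q) ∨
      (y = ProcLC.plus (ProcLC.pre Act.tau (ProcLC.plus p q)) q ∧ x = ProcLC.plus p q),
    ⟨?_, ?_⟩, Or.inr (Or.inl ⟨rfl, rfl⟩)⟩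
  · rintro x y (rfl | ⟨rfl, rfl⟩ | ⟨rfl, rfl⟩)
    · exact Or.inl rfl
    · exact Or.inr (Or.inr ⟨rfl, rfl⟩)
    · exact Or.inr (Or.inl ⟨rfl, rfl⟩)
  · rintro x y (rfl | ⟨rfl, rfl⟩ | ⟨rfl, rfl⟩) μ x' hx
    · exact Or.inr ⟨x, x', Relation.ReflTransGen.refl, hx, Or.inl rfl, Or.inl rfl⟩
    · cases hx with
      | plusL h =>
        obtain ⟨rfl, rfl⟩ := pre_inv h
        exact Or.inl ⟨rfl, Or.inl rfl⟩
      | plusR h =>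
        exact Or.inr ⟨_, x', Relation.ReflTransGen.refl, TransLC.plusR h,
          Or.inr (Or.inl ⟨rfl, rfl⟩), Or.inl rfl⟩
    · exact Or.inr ⟨ProcLC.plus p q, x',
        Relation.ReflTransGen.single (TransLC.plusL (TransLC.pre Act.tau _)), hx,
        Or.inl rfl, Or.inl rfl⟩

theorem bb_TL (p q : ProcLC Name) :
    BBLC (ProcLC.par p (ProcLC.pre Act.tau q)) (ProcLC.par p q) := by
  refine ⟨fun x y => x = y ∨
      (∃ a, x = ProcLC.par a (ProcLC.pre Act.tau q) ∧ y = ProcLC.par a q) ∨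
      (∃ a, y = ProcLC.par a (ProcLC.pre Act.tau q) ∧ x = ProcLC.par a q),
    ⟨?_, ?_⟩, Or.inr (Or.inl ⟨p, rfl, rfl⟩)⟩
  · rintro x y (rfl | ⟨a, rfl, rfl⟩ | ⟨a, rfl, rfl⟩)
    · exact Or.inl rfl
    · exact Or.inr (Or.inr ⟨a, rfl, rfl⟩)
    · exact Or.inr (Or.inl ⟨a, rfl, rfl⟩)
  · rintro x y (rfl | ⟨a, rfl, rfl⟩ | ⟨a, rfl, rfl⟩) μ x' hx
    · exact Or.inr ⟨x, x', Relation.ReflTransGen.refl, hx, Or.inl rfl, Or.inl rfl⟩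
    · cases hx with
      | parL h =>
        exact Or.inr ⟨_, _, Relation.ReflTransGen.refl, TransLC.parL h,
          Or.inr (Or.inl ⟨a, rfl, rfl⟩), Or.inr (Or.inl ⟨_, rfl, rfl⟩)⟩
      | parR h =>
        obtain ⟨rfl, rfl⟩ := pre_inv h
        exact Or.inl ⟨rfl, Or.inl rfl⟩
      | comm hl hr =>
        obtain ⟨h, _⟩ := pre_inv hr
        exact absurd h (by simp)
    · cases hx with
      | parL h =>
        exact Or.inr ⟨_, _, Relation.ReflTransGen.refl, TransLC.parL h,
          Or.inr (Or.inr ⟨a, rfl, rfl⟩), Or.inr (Or.inr ⟨_, rfl, rfl⟩)⟩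
      | parR h =>
        exact Or.inr ⟨ProcLC.par a q, _,
          Relation.ReflTransGen.single (TransLC.parR (TransLC.pre Act.tau q)),
          TransLC.parR h, Or.inl rfl, Or.inl rfl⟩
      | comm hl hr =>
        exact Or.inr ⟨ProcLC.par a q, _,
          Relation.ReflTransGen.single (TransLC.parR (TransLC.pre Act.tau q)),
          TransLC.comm hl hr, Or.inl rfl, Or.inl rfl⟩

end Dev4
section Dev5
variable {Name : Type}

theorem substP_subst (σ : ℕ → ProcLC Name) (σ' : ℕ → TermLC Name) (t : TermLC Name) :
    TermLC.substP σ (TermLC.subst σ' t) =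
      TermLC.substP (fun n => TermLC.substP σ (σ' n)) t := by
  induction t <;> simp [TermLC.subst, TermLC.substP, *]

theorem sound_ax : ∀ t u : TermLC Name, ERBB Name t u →
    ∀ σ : ℕ → ProcLC Name, RBBLC (TermLC.substP σ t) (TermLC.substP σ u) := by
  intro t u h σ
  cases h with
  | A0 =>
    simp only [TermLC.substP, vx]
    constructor
    · intro μ p' h
      cases h with
      | plusL h => exact ⟨p', h, bb_refl _⟩
      | plusR h => exact absurd h nil_no_trans
    · intro μ q' h
      exact ⟨q', TransLC.plusL h, bb_refl _⟩
  | A1 =>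
    simp only [TermLC.substP, vx, vy]
    constructor
    · intro μ p' h
      cases h with
      | plusL h => exact ⟨p', TransLC.plusR h, bb_refl _⟩
      | plusR h => exact ⟨p', TransLC.plusL h, bb_refl _⟩
    · intro μ q' h
      cases h with
      | plusL h => exact ⟨q', TransLC.plusR h, bb_refl _⟩
      | plusR h => exact ⟨q', TransLC.plusL h, bb_refl _⟩
  | A2 =>
    simp only [TermLC.substP, vx, vy, vz]
    constructor
    · intro μ p' h
      cases h with
      | plusL h =>
        cases h with
        | plusL h => exact ⟨p', TransLC.plusL h, bb_refl _⟩
        | plusR h => exact ⟨p', TransLC.plusR (TransLC.plusL h), bb_refl _⟩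
      | plusR h => exact ⟨p', TransLC.plusR (TransLC.plusR h), bb_refl _⟩
    · intro μ q' h
      cases h with
      | plusL h => exact ⟨q', TransLC.plusL (TransLC.plusL h), bb_refl _⟩
      | plusR h =>
        cases h with
        | plusL h => exact ⟨q', TransLC.plusL (TransLC.plusR h), bb_refl _⟩
        | plusR h => exact ⟨q', TransLC.plusR h, bb_refl _⟩
  | A3 =>
    simp only [TermLC.substP, vx]
    constructor
    · intro μ p' h
      cases h with
      | plusL h => exact ⟨p', h, bb_refl _⟩
      | plusR h => exact ⟨p', h, bb_refl _⟩
    · intro μ q' h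
      exact ⟨q', TransLC.plusL h, bb_refl _⟩
  | L0 =>
    simp only [TermLC.substP, vx]
    constructor
    · intro μ p' h
      cases h with
      | lmerge _ h => exact absurd h nil_no_trans
    · intro μ q' h
      exact absurd h nil_no_trans
  | L1 μ₀ =>
    simp only [TermLC.substP, vx, vy]
    constructor
    · intro μ p' h
      cases h with
      | lmerge _ h =>
        obtain ⟨rfl, rfl⟩ := pre_inv h
        exact ⟨_, TransLC.pre _ _, bb_refl _⟩
    · intro μ q' h
      obtain ⟨rfl, rfl⟩ := pre_inv h
      exact ⟨_, TransLC.lmerge _ (TransLC.pre _ _), bb_refl _⟩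
  | L2 =>
    simp only [TermLC.substP, vx, vy, vz]
    constructor
    · intro μ p' h
      cases h with
      | lmerge _ h =>
        cases h with
        | lmerge _ h =>
          exact ⟨_, TransLC.lmerge _ h, bb_of_sb (sb_par_assoc _ _ _)⟩
    · intro μ q' h
      cases h with
      | lmerge _ h =>
        exact ⟨_, TransLC.lmerge _ (TransLC.lmerge _ h),
          bb_of_sb (sb_par_assoc _ _ _)⟩
  | L3 =>
    simp only [TermLC.substP, vx]
    constructor
    · intro μ p' h
      cases h with
      | lmerge _ h => exact ⟨_, h, bb_of_sb (sb_par_nil _)⟩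
    · intro μ q' h
      exact ⟨_, TransLC.lmerge _ h, bb_of_sb (sb_par_nil _)⟩
  | L4 =>
    simp only [TermLC.substP, vx, vy, vz]
    constructor
    · intro μ p' h
      cases h with
      | lmerge _ h =>
        cases h with
        | plusL h => exact ⟨_, TransLC.plusL (TransLC.lmerge _ h), bb_refl _⟩
        | plusR h => exact ⟨_, TransLC.plusR (TransLC.lmerge _ h), bb_refl _⟩
    · intro μ q' h
      cases h with
      | plusL h =>
        cases h with
        | lmerge _ h => exact ⟨_, TransLC.lmerge _ (TransLC.plusL h), bb_refl _⟩
      | plusR h =>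
        cases h with
        | lmerge _ h => exact ⟨_, TransLC.lmerge _ (TransLC.plusR h), bb_refl _⟩
  | C0 =>
    simp only [TermLC.substP, vx]
    constructor
    · intro μ p' h
      cases h with
      | cmerge hl hr => exact absurd hl nil_no_trans
    · intro μ q' h
      exact absurd h nil_no_trans
  | C1 =>
    simp only [TermLC.substP, vx, vy]
    constructor
    · intro μ p' h
      cases h with
      | cmerge hl hr =>
        refine ⟨_, TransLC.cmerge hr ?_, bb_of_sb (sb_par_comm _ _)⟩
        rw [Obs.bar_bar]; exact hl
    · intro μ q' h
      cases h with
      | cmerge hl hr =>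
        refine ⟨_, TransLC.cmerge hr ?_, bb_of_sb (sb_par_comm _ _)⟩
        rw [Obs.bar_bar]; exact hl
  | C2 =>
    simp only [TermLC.substP, vx, vy, vz]
    constructor
    · intro μ p' h
      cases h with
      | cmerge hl hr => cases hl
    · intro μ q' h
      cases h with
      | cmerge hl hr => cases hr
  | C3 =>
    simp only [TermLC.substP, vx, vy, vz]
    constructor
    · intro μ p' h
      cases h with
      | cmerge hl hr =>
        cases hl with
        | plusL h => exact ⟨_, TransLC.plusL (TransLC.cmerge h hr), bb_refl _⟩
        | plusR h => exact ⟨_, TransLC.plusR (TransLC.cmerge h hr), bb_refl _⟩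
    · intro μ q' h
      cases h with
      | plusL h =>
        cases h with
        | cmerge hl hr => exact ⟨_, TransLC.cmerge (TransLC.plusL hl) hr, bb_refl _⟩
      | plusR h =>
        cases h with
        | cmerge hl hr => exact ⟨_, TransLC.cmerge (TransLC.plusR hl) hr, bb_refl _⟩
  | C4 α β hαβ =>
    subst hαβ
    simp only [TermLC.substP, vx, vy]
    constructor
    · intro μ p' h
      cases h with
      | cmerge hl hr =>
        obtain ⟨_, rfl⟩ := pre_inv hl
        obtain ⟨_, rfl⟩ := pre_inv hr
        exact ⟨_, TransLC.pre _ _, bb_refl _⟩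
    · intro μ q' h
      obtain ⟨rfl, rfl⟩ := pre_inv h
      refine ⟨_, TransLC.cmerge (TransLC.pre _ _) ?_, bb_refl _⟩
      rw [Obs.bar_bar]
      exact TransLC.pre _ _
  | C5 α β hαβ =>
    simp only [TermLC.substP, vx, vy]
    constructor
    · intro μ p' h
      exfalso
      cases h with
      | cmerge hl hr =>
        obtain ⟨h1, _⟩ := pre_inv hl
        obtain ⟨h2, _⟩ := pre_inv hr
        apply hαβ
        injection h1 with h1
        injection h2 with h2
        rw [← h1, ← h2, Obs.bar_bar]
    · intro μ q' h
      exact absurd h nil_no_trans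
  | C6 =>
    simp only [TermLC.substP, vx, vy, vz]
    constructor
    · intro μ p' h
      cases h with
      | cmerge hl hr =>
        cases hl with
        | lmerge _ h =>
          exact ⟨_, TransLC.lmerge _ (TransLC.cmerge h hr), bb_of_sb (sb_swap23 _ _ _)⟩
    · intro μ q' h
      cases h with
      | lmerge _ h =>
        cases h with
        | cmerge hl hr =>
          exact ⟨_, TransLC.cmerge (TransLC.lmerge _ hl) hr,
            bb_of_sb (sb_swap23 _ _ _)⟩
  | C7 =>
    simp only [TermLC.substP, vx, vy, vz]
    constructor
    · intro μ p' h
      cases h with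
      | cmerge hl hr => cases hl
    · intro μ q' h
      exact absurd h nil_no_trans
  | P =>
    simp only [TermLC.substP, vx, vy]
    constructor
    · intro μ p' h
      cases h with
      | parL h => exact ⟨_, TransLC.plusL (TransLC.plusL (TransLC.lmerge _ h)), bb_refl _⟩
      | parR h =>
        exact ⟨_, TransLC.plusL (TransLC.plusR (TransLC.lmerge _ h)),
          bb_of_sb (sb_par_comm _ _)⟩
      | comm hl hr => exact ⟨_, TransLC.plusR (TransLC.cmerge hl hr), bb_refl _⟩
    · intro μ q' h
      cases h with
      | plusL h =>
        cases h with
        | plusL h =>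
          cases h with
          | lmerge _ h => exact ⟨_, TransLC.parL h, bb_refl _⟩
        | plusR h =>
          cases h with
          | lmerge _ h => exact ⟨_, TransLC.parR h, bb_of_sb (sb_par_comm _ _)⟩
      | plusR h =>
        cases h with
        | cmerge hl hr => exact ⟨_, TransLC.comm hl hr, bb_refl _⟩
  | TB μ₀ =>
    simp only [TermLC.substP, vx, vy]
    exact rbb_pre μ₀ (bb_TB _ _)
  | TL =>
    simp only [TermLC.substP, vx, vy]
    constructor
    · intro μ p' h
      cases h with
      | lmerge _ h => exact ⟨_, TransLC.lmerge _ h, bb_TL _ _⟩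
    · intro μ q' h
      cases h with
      | lmerge _ h => exact ⟨_, TransLC.lmerge _ h, bb_TL _ _⟩

end Dev5
section Dev6
variable {Name : Type}

theorem sound_deriv : ∀ t u : TermLC Name, DerivLC (ERBB Name) t u →
    ∀ σ : ℕ → ProcLC Name, RBBLC (TermLC.substP σ t) (TermLC.substP σ u) := by
  intro t u h
  induction h with
  | ax σ' hE =>
    intro σ
    rw [substP_subst, substP_subst]
    exact sound_ax _ _ hE _
  | refl t => exact fun σ => rbb_refl _
  | symm _ ih => exact fun σ => rbb_symm (ih σ)
  | trans _ _ ih1 ih2 => exact fun σ => rbb_trans (ih1 σ) (ih2 σ)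
  | pre μ _ ih =>
    intro σ
    simp only [TermLC.substP]
    exact rbb_pre μ (bb_of_rbb (ih σ))
  | plus _ _ ih1 ih2 =>
    intro σ
    simp only [TermLC.substP]
    exact rbb_plus (ih1 σ) (ih2 σ)
  | par _ _ ih1 ih2 =>
    intro σ
    simp only [TermLC.substP]
    exact rbb_par (ih1 σ) (ih2 σ)
  | lmerge _ _ ih1 ih2 =>
    intro σ
    simp only [TermLC.substP]
    exact rbb_lmerge (ih1 σ) (ih2 σ)
  | cmerge _ _ ih1 ih2 =>
    intro σ
    simp only [TermLC.substP]
    exact rbb_cmerge (ih1 σ) (ih2 σ)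

end Dev6

/-- `E_RBB` is sound modulo rooted branching bisimilarity over
CCS_LC, and consequently every derivable equation is sound. -/
theorem ERBB_sound {Name : Type} [Nonempty Name] :
    (∀ t u : TermLC Name, ERBB Name t u →
      ∀ σ : ℕ → ProcLC Name, RBBLC (TermLC.substP σ t) (TermLC.substP σ u)) ∧
    (∀ t u : TermLC Name, DerivLC (ERBB Name) t u →
      ∀ σ : ℕ → ProcLC Name, RBBLC (TermLC.substP σ t) (TermLC.substP σ u)) :=
  ⟨sound_ax, sound_deriv⟩
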